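/- (Davis–Kahan variant for singular subspaces.) Let Q ∈ ℝ^{N×d} (N ≥ d) be a rank-d matrix with nonzero singular values σ₁ > … > σ_d > 0 whose left singular vectors form the columns of U ∈ ℝ^{N×d}. Let Q̂ be any N×d matrix and let Û ∈ ℝ^{N×d} contain its left singular vectors. Then there exists a d×d orthogonal matrix Ô such that ‖Û·Ô − U‖_F ≤ (2√(2d)/σ_d²)·( 2σ₁ + ‖Q̂ − Q‖_op )·‖Q̂ − Q‖_op. -/

import Mathlib

open Matrix

namespace Stmt12

/-- Reinterpret a plain vector `Fin n → ℝ` as an element of `EuclideanSpace ℝ (Fin n)`,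
so that `‖·‖` denotes the Euclidean (ℓ²) norm. -/
def toEuc {n : ℕ} (v : Fin n → ℝ) : EuclideanSpace ℝ (Fin n) := WithLp.toLp 2 v

/-- The ℓ²→ℓ² operator (spectral) norm of a real matrix. -/
noncomputable def opNorm {m n : ℕ} (A : Matrix (Fin m) (Fin n) ℝ) : ℝ :=
  sSup {y : ℝ | ∃ x : EuclideanSpace ℝ (Fin n), ‖x‖ ≤ 1 ∧ y = ‖toEuc (A.mulVec x)‖}

/-- The Frobenius norm of a real matrix. -/
noncomputable def frobNorm {m n : ℕ} (A : Matrix (Fin m) (Fin n) ℝ) : ℝ :=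
  Real.sqrt (∑ i, ∑ j, (A i j) ^ 2)

lemma euc_norm_sq {n : ℕ} (v : Fin n → ℝ) : ‖toEuc v‖ ^ 2 = ∑ i, v i ^ 2 := by
  rw [EuclideanSpace.norm_eq, Real.sq_sqrt (by positivity)]
  simp [toEuc, sq_abs]
lemma euc_norm_nonneg {n : ℕ} (v : Fin n → ℝ) : 0 ≤ ‖toEuc v‖ := norm_nonneg _
lemma euc_inner {n : ℕ} (v w : Fin n → ℝ) :
    inner ℝ (toEuc v) (toEuc w) = v ⬝ᵥ w := by
  simp [toEuc, EuclideanSpace.inner_eq_star_dotProduct, dotProduct, mul_comm]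

lemma euc_inner' {n : ℕ} (x y : EuclideanSpace ℝ (Fin n)) :
    inner ℝ x y = x.ofLp ⬝ᵥ y.ofLp := by
  rw [EuclideanSpace.inner_eq_star_dotProduct, dotProduct_comm]; simp

lemma euc_dot_sq_le {n : ℕ} (v w : Fin n → ℝ) :
    (v ⬝ᵥ w) ^ 2 ≤ ‖toEuc v‖ ^ 2 * ‖toEuc w‖ ^ 2 := by
  have := abs_real_inner_le_norm (toEuc v) (toEuc w)
  rw [euc_inner] at this
  have h2 : (v ⬝ᵥ w) ^ 2 ≤ |v ⬝ᵥ w| ^ 2 := by rw [sq_abs]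
  nlinarith [abs_nonneg (v ⬝ᵥ w), euc_norm_nonneg v, euc_norm_nonneg w]


lemma le_of_sq_le_sq {a b : ℝ} (ha : 0 ≤ a) (hb : 0 ≤ b) (h : a ^ 2 ≤ b ^ 2) : a ≤ b := by
  have := Real.sqrt_le_sqrt h
  rwa [Real.sqrt_sq ha, Real.sqrt_sq hb] at this

/-- crude bound: `‖Ax‖ ≤ ‖A‖_F ‖x‖`. -/
lemma mulVec_le_frob {m n : ℕ} (A : Matrix (Fin m) (Fin n) ℝ) (x : Fin n → ℝ) :
    ‖toEuc (A.mulVec x)‖ ≤ frobNorm A * ‖toEuc x‖ := by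
  have hsq : ‖toEuc (A.mulVec x)‖ ^ 2 ≤ (∑ i, ∑ j, (A i j) ^ 2) * ‖toEuc x‖ ^ 2 := by
    rw [euc_norm_sq]
    rw [Finset.sum_mul]
    apply Finset.sum_le_sum
    intro i _
    have := euc_dot_sq_le (A i) x
    rw [euc_norm_sq (A i)] at this
    simpa [Matrix.mulVec, dotProduct] using this
  have hf : 0 ≤ frobNorm A := Real.sqrt_nonneg _
  have hfs : frobNorm A ^ 2 = ∑ i, ∑ j, (A i j) ^ 2 := by
    rw [frobNorm, Real.sq_sqrt (by positivity)]
  apply le_of_sq_le_sq (euc_norm_nonneg _) (by positivity)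
  calc ‖toEuc (A.mulVec x)‖ ^ 2 ≤ (∑ i, ∑ j, (A i j) ^ 2) * ‖toEuc x‖ ^ 2 := hsq
  _ = (frobNorm A * ‖toEuc x‖) ^ 2 := by rw [mul_pow, hfs]

lemma opNorm_nonneg {m n : ℕ} (A : Matrix (Fin m) (Fin n) ℝ) : 0 ≤ opNorm A := by
  have hmem : (‖toEuc (A.mulVec (0 : Fin n → ℝ))‖ : ℝ) ∈
      {y : ℝ | ∃ x : EuclideanSpace ℝ (Fin n), ‖x‖ ≤ 1 ∧ y = ‖toEuc (A.mulVec x)‖} := by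
    exact ⟨0, by simp, rfl⟩
  have hbdd : BddAbove {y : ℝ | ∃ x : EuclideanSpace ℝ (Fin n), ‖x‖ ≤ 1 ∧ y = ‖toEuc (A.mulVec x)‖} := by
    refine ⟨frobNorm A, ?_⟩
    rintro y ⟨x, hx, rfl⟩
    calc ‖toEuc (A.mulVec x)‖ ≤ frobNorm A * ‖toEuc x‖ := mulVec_le_frob A x
    _ ≤ frobNorm A * 1 := by
        have : ‖toEuc x‖ ≤ 1 := by simpa [toEuc] using hx
        have hf : 0 ≤ frobNorm A := Real.sqrt_nonneg _
        nlinarith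
    _ = frobNorm A := mul_one _
  calc (0:ℝ) ≤ ‖toEuc (A.mulVec (0 : Fin n → ℝ))‖ := euc_norm_nonneg _
  _ ≤ opNorm A := le_csSup hbdd hmem

lemma mulVec_le_opNorm {m n : ℕ} (A : Matrix (Fin m) (Fin n) ℝ) (x : Fin n → ℝ) :
    ‖toEuc (A.mulVec x)‖ ≤ opNorm A * ‖toEuc x‖ := by
  have hbdd : BddAbove {y : ℝ | ∃ x : EuclideanSpace ℝ (Fin n), ‖x‖ ≤ 1 ∧ y = ‖toEuc (A.mulVec x)‖} := by
    refine ⟨frobNorm A, ?_⟩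
    rintro y ⟨x, hx, rfl⟩
    calc ‖toEuc (A.mulVec x)‖ ≤ frobNorm A * ‖toEuc x‖ := mulVec_le_frob A x
    _ ≤ frobNorm A := by
        have hf : 0 ≤ frobNorm A := Real.sqrt_nonneg _
        have : ‖toEuc x‖ ≤ 1 := by simpa [toEuc] using hx
        nlinarith
  rcases eq_or_ne ‖toEuc x‖ 0 with h0 | h0
  · have hx0 : toEuc x = 0 := by rwa [norm_eq_zero] at h0
    have : x = 0 := by simpa [toEuc] using hx0
    subst this
    simp only [Matrix.mulVec_zero]
    have : ‖toEuc (0 : Fin m → ℝ)‖ = 0 := by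
      rw [show toEuc (0 : Fin m → ℝ) = 0 from by simp [toEuc], norm_zero]
    rw [this, h0, mul_zero]
  · set u : Fin n → ℝ := ‖toEuc x‖⁻¹ • x with hu
    have hnx : 0 < ‖toEuc x‖ := lt_of_le_of_ne (euc_norm_nonneg x) (Ne.symm h0)
    have hun : ‖toEuc u‖ = 1 := by
      have : toEuc u = ‖toEuc x‖⁻¹ • toEuc x := by simp [toEuc, hu]
      rw [this, norm_smul]
      simp [abs_of_pos (inv_pos.mpr hnx)]
      field_simp
    have hmem : ‖toEuc (A.mulVec u)‖ ∈
        {y : ℝ | ∃ x : EuclideanSpace ℝ (Fin n), ‖x‖ ≤ 1 ∧ y = ‖toEuc (A.mulVec x)‖} :=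
      ⟨toEuc u, le_of_eq hun, rfl⟩
    have hle : ‖toEuc (A.mulVec u)‖ ≤ opNorm A := le_csSup hbdd hmem
    have hAu : A.mulVec u = ‖toEuc x‖⁻¹ • A.mulVec x := by
      rw [hu, Matrix.mulVec_smul]
    have : ‖toEuc (A.mulVec u)‖ = ‖toEuc x‖⁻¹ * ‖toEuc (A.mulVec x)‖ := by
      have h1 : toEuc (A.mulVec u) = ‖toEuc x‖⁻¹ • toEuc (A.mulVec x) := by
        rw [hAu]; simp [toEuc]
      rw [h1, norm_smul]
      simp [abs_of_pos (inv_pos.mpr hnx)]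
    rw [this] at hle
    calc ‖toEuc (A.mulVec x)‖ = (‖toEuc x‖⁻¹ * ‖toEuc (A.mulVec x)‖) * ‖toEuc x‖ := by
          field_simp
    _ ≤ opNorm A * ‖toEuc x‖ := by nlinarith [hnx.le]

lemma euc_norm_sq_dot {n : ℕ} (v : Fin n → ℝ) : ‖toEuc v‖ ^ 2 = v ⬝ᵥ v := by
  rw [euc_norm_sq]; simp [dotProduct, sq]


lemma euc_dot_le {n : ℕ} (v w : Fin n → ℝ) :
    v ⬝ᵥ w ≤ ‖toEuc v‖ * ‖toEuc w‖ := by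
  rw [← euc_inner]; exact real_inner_le_norm _ _

lemma transpose_dot {m n : ℕ} (A : Matrix (Fin m) (Fin n) ℝ) (x : Fin m → ℝ) (y : Fin n → ℝ) :
    (Aᵀ.mulVec x) ⬝ᵥ y = x ⬝ᵥ (A.mulVec y) := by
  rw [Matrix.mulVec_transpose, ← dotProduct_mulVec]

/-- bound transfers to the transpose. -/
lemma transpose_bound {m n : ℕ} {A : Matrix (Fin m) (Fin n) ℝ} {c : ℝ} (hc : 0 ≤ c)
    (h : ∀ y : Fin n → ℝ, ‖toEuc (A.mulVec y)‖ ≤ c * ‖toEuc y‖) (x : Fin m → ℝ) :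
    ‖toEuc (Aᵀ.mulVec x)‖ ≤ c * ‖toEuc x‖ := by
  set y := Aᵀ.mulVec x with hy
  have h1 : ‖toEuc y‖ ^ 2 = x ⬝ᵥ (A.mulVec y) := by
    rw [euc_norm_sq_dot, hy, transpose_dot]
  have h2 : x ⬝ᵥ (A.mulVec y) ≤ ‖toEuc x‖ * (c * ‖toEuc y‖) :=
    le_trans (euc_dot_le _ _) (by
      have := h y
      nlinarith [euc_norm_nonneg x])
  rcases le_or_gt ‖toEuc y‖ 0 with h0 | h0
  · have : ‖toEuc y‖ = 0 := le_antisymm h0 (euc_norm_nonneg y)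
    rw [this]
    positivity
  · nlinarith

lemma norm_mulVec_isometry {m n : ℕ} {U : Matrix (Fin m) (Fin n) ℝ}
    (hU : Uᵀ * U = 1) (x : Fin n → ℝ) : ‖toEuc (U.mulVec x)‖ = ‖toEuc x‖ := by
  have h : ‖toEuc (U.mulVec x)‖ ^ 2 = ‖toEuc x‖ ^ 2 := by
    rw [euc_norm_sq_dot, euc_norm_sq_dot, ← transpose_dot, Matrix.mulVec_mulVec, hU,
      Matrix.one_mulVec]
  have h1 := euc_norm_nonneg (U.mulVec x)
  have h2 := euc_norm_nonneg x
  nlinarith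

/-- the complementary projection `1 - Û Ûᵀ` is a contraction. -/
lemma proj_compl_contraction {m n : ℕ} {U : Matrix (Fin m) (Fin n) ℝ}
    (hU : Uᵀ * U = 1) (x : Fin m → ℝ) :
    ‖toEuc (((1 : Matrix (Fin m) (Fin m) ℝ) - U * Uᵀ).mulVec x)‖ ≤ ‖toEuc x‖ := by
  have key : ‖toEuc (((1 : Matrix (Fin m) (Fin m) ℝ) - U * Uᵀ).mulVec x)‖ ^ 2
      = ‖toEuc x‖ ^ 2 - ‖toEuc (Uᵀ.mulVec x)‖ ^ 2 := by
    have expand : ((1 : Matrix (Fin m) (Fin m) ℝ) - U * Uᵀ).mulVec x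
        = x - U.mulVec (Uᵀ.mulVec x) := by
      rw [Matrix.sub_mulVec, Matrix.one_mulVec, Matrix.mulVec_mulVec]
    rw [expand]
    have s1 : ‖toEuc (x - U.mulVec (Uᵀ.mulVec x))‖ ^ 2
        = x ⬝ᵥ x - 2 * (x ⬝ᵥ U.mulVec (Uᵀ.mulVec x))
          + (U.mulVec (Uᵀ.mulVec x)) ⬝ᵥ (U.mulVec (Uᵀ.mulVec x)) := by
      rw [euc_norm_sq_dot]
      simp only [sub_dotProduct, dotProduct_sub]
      rw [dotProduct_comm (U.mulVec (Uᵀ.mulVec x)) x]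
      ring
    rw [s1, euc_norm_sq_dot, euc_norm_sq_dot]
    have s2 : (U.mulVec (Uᵀ.mulVec x)) ⬝ᵥ (U.mulVec (Uᵀ.mulVec x))
        = (Uᵀ.mulVec x) ⬝ᵥ (Uᵀ.mulVec x) := by
      have := norm_mulVec_isometry hU (Uᵀ.mulVec x)
      rw [← euc_norm_sq_dot, ← euc_norm_sq_dot, this]
    have s3 : x ⬝ᵥ U.mulVec (Uᵀ.mulVec x) = (Uᵀ.mulVec x) ⬝ᵥ (Uᵀ.mulVec x) := by
      rw [← transpose_dot]
    rw [s2, s3]; ring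
  have h1 := euc_norm_nonneg (((1 : Matrix (Fin m) (Fin m) ℝ) - U * Uᵀ).mulVec x)
  have h2 := euc_norm_nonneg x
  nlinarith [sq_nonneg ‖toEuc (Uᵀ.mulVec x)‖]


/-- Procrustes-type lemma: for a square contraction `M` there is an orthogonal `O`
with `tr(MᵀM) ≤ tr(OᵀM)`. -/
lemma procrustes {d : ℕ} (M : Matrix (Fin d) (Fin d) ℝ)
    (hM : ∀ x : Fin d → ℝ, ‖toEuc (M.mulVec x)‖ ≤ ‖toEuc x‖) :
    ∃ O : Matrix (Fin d) (Fin d) ℝ, Oᵀ * O = 1 ∧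
      Matrix.trace (Mᵀ * M) ≤ Matrix.trace (Oᵀ * M) := by
  set H : Matrix (Fin d) (Fin d) ℝ := Mᵀ * M with hH_def
  have hH : H.IsHermitian := by
    have h := Matrix.isHermitian_conjTranspose_mul_self M
    rwa [Matrix.conjTranspose_eq_transpose_of_trivial] at h
  set bas := hH.eigenvectorBasis with hbas
  set μ : Fin d → ℝ := hH.eigenvalues with hμ
  -- dot products of images of eigenvectors
  have hdot : ∀ i j, (M.mulVec (bas i)) ⬝ᵥ (M.mulVec (bas j))
      = μ j * (if i = j then (1:ℝ) else 0) := by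
    intro i j
    have h1 : (M.mulVec (bas i)) ⬝ᵥ (M.mulVec (bas j))
        = (bas i : Fin d → ℝ) ⬝ᵥ (H.mulVec (bas j)) := by
      have := transpose_dot Mᵀ (bas i : Fin d → ℝ) (M.mulVec (bas j))
      rw [Matrix.transpose_transpose] at this
      rw [this, Matrix.mulVec_mulVec, hH_def]
    have h2 : H.mulVec (bas j) = μ j • (bas j : Fin d → ℝ) := hH.mulVec_eigenvectorBasis j
    rw [h1, h2, dotProduct_smul]
    have h3 : (bas i : Fin d → ℝ) ⬝ᵥ (bas j : Fin d → ℝ) = if i = j then (1:ℝ) else 0 := by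
      rw [← euc_inner']
      exact orthonormal_iff_ite.mp bas.orthonormal i j
    rw [h3]
    simp
  have hμ_nonneg : ∀ i, 0 ≤ μ i := by
    intro i
    have := hdot i i
    simp at this
    have h0 : 0 ≤ (M.mulVec (bas i)) ⬝ᵥ (M.mulVec (bas i)) := by
      rw [← euc_norm_sq_dot]; positivity
    linarith
  have hμ_le_one : ∀ i, μ i ≤ 1 := by
    intro i
    have h1 := hdot i i
    simp at h1
    have hb : ‖toEuc (bas i : Fin d → ℝ)‖ = 1 := by simpa [toEuc] using bas.orthonormal.1 i
    have h2 := hM (bas i : Fin d → ℝ)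
    have h3 : ‖toEuc (M.mulVec (bas i : Fin d → ℝ))‖ ^2 ≤ ‖toEuc (bas i : Fin d → ℝ)‖^2 := by
      nlinarith [euc_norm_nonneg (M.mulVec (bas i : Fin d → ℝ))]
    rw [euc_norm_sq_dot, euc_norm_sq_dot, h1] at h3
    have hb2 : (bas i : Fin d → ℝ) ⬝ᵥ (bas i : Fin d → ℝ) = 1 := by
      rw [← euc_norm_sq_dot, hb]; norm_num
    rw [hb2] at h3
    linarith
  -- the orthonormal family of normalized images
  classical
  set a : Fin d → EuclideanSpace ℝ (Fin d) := fun i =>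
    if μ i = 0 then bas i else (Real.sqrt (μ i))⁻¹ • toEuc (M.mulVec (bas i)) with ha_def
  have hMv_zero : ∀ i, μ i = 0 → M.mulVec (bas i) = 0 := by
    intro i h0
    have h1 := hdot i i
    rw [h0, zero_mul] at h1
    rwa [dotProduct_self_eq_zero] at h1
  have ha_orth : Orthonormal ℝ (Set.domRestrict {i | μ i ≠ 0} a) := by
    rw [orthonormal_iff_ite]
    rintro ⟨i, hi⟩ ⟨j, hj⟩
    simp only [Set.domRestrict_apply, ha_def]
    rw [if_neg hi, if_neg hj]
    rw [real_inner_smul_left, real_inner_smul_right]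
    have : inner ℝ (toEuc (M.mulVec (bas i))) (toEuc (M.mulVec (bas j)))
        = μ j * (if i = j then (1:ℝ) else 0) := by rw [euc_inner, hdot]
    rw [this]
    by_cases hij : i = j
    · subst hij
      have e1 : (⟨i, hi⟩ : {i | μ i ≠ 0}) = ⟨i, hj⟩ := Subtype.ext rfl
      rw [if_pos rfl, if_pos e1, mul_one]
      have hμpos : 0 < μ i := lt_of_le_of_ne (hμ_nonneg i) (Ne.symm hi)
      have hs : Real.sqrt (μ i) > 0 := Real.sqrt_pos.mpr hμpos
      have hss : Real.sqrt (μ i) * Real.sqrt (μ i) = μ i := Real.mul_self_sqrt hμpos.le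
      field_simp
      rw [Real.sq_sqrt hμpos.le]
    · have : (⟨i, hi⟩ : {i | μ i ≠ 0}) ≠ ⟨j, hj⟩ := by simpa using hij
      rw [if_neg hij, if_neg this]
      ring
  obtain ⟨b, hb⟩ := ha_orth.exists_orthonormalBasis_extension_of_card_eq
    (by simp [finrank_euclideanSpace])
  -- matrices V (eigenvectors) and B (extended family)
  set V : Matrix (Fin d) (Fin d) ℝ := Matrix.of (fun j i => (bas i : Fin d → ℝ) j) with hV_def
  set B : Matrix (Fin d) (Fin d) ℝ := Matrix.of (fun j i => (b i : Fin d → ℝ) j) with hB_def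
  have hVo : Vᵀ * V = 1 := by
    ext i k
    simp only [Matrix.mul_apply, Matrix.transpose_apply, hV_def, Matrix.of_apply]
    have h3 : (bas i : Fin d → ℝ) ⬝ᵥ (bas k : Fin d → ℝ) = if i = k then (1:ℝ) else 0 := by
      rw [← euc_inner']
      exact orthonormal_iff_ite.mp bas.orthonormal i k
    simpa [dotProduct, Matrix.one_apply] using h3
  have hBo : Bᵀ * B = 1 := by
    ext i k
    simp only [Matrix.mul_apply, Matrix.transpose_apply, hB_def, Matrix.of_apply]
    have h3 : (b i : Fin d → ℝ) ⬝ᵥ (b k : Fin d → ℝ) = if i = k then (1:ℝ) else 0 := by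
      rw [← euc_inner']
      exact orthonormal_iff_ite.mp b.orthonormal i k
    simpa [dotProduct, Matrix.one_apply] using h3
  have hVVt : V * Vᵀ = 1 := mul_eq_one_comm.mp hVo
  refine ⟨B * Vᵀ, ?_, ?_⟩
  · rw [Matrix.transpose_mul, Matrix.transpose_transpose, Matrix.mul_assoc,
      ← Matrix.mul_assoc Bᵀ B Vᵀ, hBo, Matrix.one_mul, hVVt]
  · -- trace computations
    have htrH : Matrix.trace H = ∑ i, μ i := by
      have hHV : H * V = V * Matrix.diagonal μ := by
        ext j i
        have h2 : H.mulVec (bas i) = μ i • (bas i : Fin d → ℝ) := hH.mulVec_eigenvectorBasis i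
        have lhs : (H * V) j i = (H.mulVec (bas i)) j := by
          simp [Matrix.mul_apply, Matrix.mulVec, dotProduct, hV_def]
        rw [lhs, h2, Matrix.mul_diagonal]
        simp [hV_def, mul_comm]
      have : H = V * Matrix.diagonal μ * Vᵀ := by
        calc H = H * (V * Vᵀ) := by rw [hVVt, Matrix.mul_one]
        _ = (H * V) * Vᵀ := (Matrix.mul_assoc H V Vᵀ).symm
        _ = V * Matrix.diagonal μ * Vᵀ := by rw [hHV]
      rw [this, Matrix.trace_mul_comm, ← Matrix.mul_assoc, hVo, Matrix.one_mul,
        Matrix.trace_diagonal]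
    rw [htrH]
    have htrO : Matrix.trace ((B * Vᵀ)ᵀ * M) = ∑ i, (b i : Fin d → ℝ) ⬝ᵥ (M.mulVec (bas i)) := by
      rw [Matrix.transpose_mul, Matrix.transpose_transpose, Matrix.mul_assoc,
        Matrix.trace_mul_comm]
      rw [Matrix.trace]
      congr 1
      ext i
      simp only [Matrix.diag_apply, Matrix.mul_apply, Matrix.transpose_apply, hB_def, hV_def,
        Matrix.of_apply, dotProduct, Matrix.mulVec, Finset.mul_sum, Finset.sum_mul]
      rw [Finset.sum_comm]
      congr 1; ext j; congr 1; ext k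
      ring
    rw [htrO]
    apply Finset.sum_le_sum
    intro i _
    by_cases h0 : μ i = 0
    · rw [hMv_zero i h0, dotProduct_zero, h0]
    · have hbi : (b i : Fin d → ℝ) = (Real.sqrt (μ i))⁻¹ • (M.mulVec (bas i)) := by
        have := hb i h0
        rw [ha_def] at this
        simp only [if_neg h0] at this
        rw [this]; simp [toEuc]
      rw [hbi, smul_dotProduct]
      have hdd := hdot i i
      simp at hdd
      rw [hdd]
      have hμpos : 0 < μ i := lt_of_le_of_ne (hμ_nonneg i) (Ne.symm h0)
      have hs : 0 < Real.sqrt (μ i) := Real.sqrt_pos.mpr hμpos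
      have h1 : (Real.sqrt (μ i))⁻¹ * μ i = Real.sqrt (μ i) := by
        rw [← Real.sqrt_mul_self (le_of_lt hμpos)]
        field_simp
        rw [Real.sq_sqrt (Real.sqrt_nonneg _)]
      rw [smul_eq_mul, h1]
      calc μ i = Real.sqrt (μ i ^ 2) := by rw [Real.sqrt_sq (hμ_nonneg i)]
      _ ≤ Real.sqrt (μ i) := Real.sqrt_le_sqrt (by nlinarith [hμ_nonneg i, hμ_le_one i])

/-- diagonal bound -/
lemma diag_mulVec_le {n : ℕ} {t : Fin n → ℝ} {c : ℝ} (hc : 0 ≤ c) (h : ∀ i, |t i| ≤ c)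
    (z : Fin n → ℝ) : ‖toEuc ((Matrix.diagonal t).mulVec z)‖ ≤ c * ‖toEuc z‖ := by
  apply le_of_sq_le_sq (euc_norm_nonneg _) (by positivity)
  rw [mul_pow, euc_norm_sq, euc_norm_sq]
  rw [Finset.mul_sum]
  apply Finset.sum_le_sum
  intro i _
  rw [Matrix.mulVec_diagonal]
  have h1 : t i ^ 2 ≤ c ^ 2 := by
    have := h i
    nlinarith [abs_nonneg (t i), sq_abs (t i)]
  nlinarith [sq_nonneg (z i)]

/-- sum of entrywise products equals trace of `Aᵀ * B`. -/
lemma sum_mul_eq_trace {m n : ℕ} (A B : Matrix (Fin m) (Fin n) ℝ) :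
    ∑ i, ∑ j, A i j * B i j = Matrix.trace (Aᵀ * B) := by
  rw [Matrix.trace]
  simp only [Matrix.diag_apply, Matrix.mul_apply, Matrix.transpose_apply]
  rw [Finset.sum_comm]

lemma sum_sq_eq_trace {m n : ℕ} (A : Matrix (Fin m) (Fin n) ℝ) :
    ∑ i, ∑ j, A i j ^ 2 = Matrix.trace (Aᵀ * A) := by
  rw [← sum_mul_eq_trace]
  congr 1; ext i; congr 1; ext j; ring

lemma col_norm_sq {m n : ℕ} (A : Matrix (Fin m) (Fin n) ℝ) (j : Fin n) :
    ∑ i, A i j ^ 2 = ‖toEuc (fun i => A i j)‖ ^ 2 := by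
  rw [euc_norm_sq]

lemma mul_col {m n p : ℕ} (X : Matrix (Fin m) (Fin n) ℝ) (Y : Matrix (Fin n) (Fin p) ℝ)
    (j : Fin p) : (fun i => (X * Y) i j) = X.mulVec (fun k => Y k j) := by
  ext i
  simp [Matrix.mul_apply, Matrix.mulVec, dotProduct]


set_option maxHeartbeats 1000000 in
/-- **Theorem (Davis–Kahan variant of Yu, Wang and Samworth, for singular subspaces).**
Let `Q ∈ ℝ^{N×d}` (`N ≥ d`) be a rank-`d` matrix with singular value decomposition
`Q = U (diag s) Wᵀ`, where `s 0 > s 1 > … > s (d−1) > 0`, and let `σ₁` (resp. `σ_d`)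
be the largest (resp. smallest) of these singular values.  Let `Q̂` be any `N×d`
matrix with singular value decomposition `Q̂ = Û (diag ŝ) Ŵᵀ` (so the columns of `Û`
are the left singular vectors of `Q̂`, ordered by decreasing singular value).  Then
there exists a `d×d` orthogonal matrix `Ô` with
`‖Û Ô − U‖_F ≤ (2√(2d)/σ_d²) (2σ₁ + ‖Q̂ − Q‖_op) ‖Q̂ − Q‖_op`. -/
theorem stmt_12 {N d : ℕ} (hNd : d ≤ N)
    (Q Qhat U Uhat : Matrix (Fin N) (Fin d) ℝ)
    (s : Fin d → ℝ) (W : Matrix (Fin d) (Fin d) ℝ)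
    (hs_anti : StrictAnti s) (hs_pos : ∀ i, 0 < s i)
    (hU : Uᵀ * U = 1) (hW : Wᵀ * W = 1)
    (hSVD : Q = U * Matrix.diagonal s * Wᵀ)
    (shat : Fin d → ℝ) (What : Matrix (Fin d) (Fin d) ℝ)
    (hshat_anti : Antitone shat) (hshat_nonneg : ∀ i, 0 ≤ shat i)
    (hUhat : Uhatᵀ * Uhat = 1) (hWhat : Whatᵀ * What = 1)
    (hSVDhat : Qhat = Uhat * Matrix.diagonal shat * Whatᵀ)
    (σ₁ σd : ℝ) (hσ₁ : IsGreatest (Set.range s) σ₁) (hσd : IsLeast (Set.range s) σd) :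
    ∃ O : Matrix (Fin d) (Fin d) ℝ, Oᵀ * O = 1 ∧
      frobNorm (Uhat * O - U) ≤
        (2 * Real.sqrt (2 * d) / σd ^ 2) * (2 * σ₁ + opNorm (Qhat - Q)) *
          opNorm (Qhat - Q) := by
  classical
  obtain ⟨i0, hi0⟩ := hσd.1
  have hσd_pos : 0 < σd := hi0 ▸ hs_pos i0
  have hs_le : ∀ i, s i ≤ σ₁ := fun i => hσ₁.2 ⟨i, rfl⟩
  have hd_le : ∀ i, σd ≤ s i := fun i => hσd.2 ⟨i, rfl⟩
  have hσ₁_pos : 0 < σ₁ := lt_of_lt_of_le hσd_pos (hi0 ▸ hs_le i0)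
  set ε := opNorm (Qhat - Q) with hε_def
  have hε0 : 0 ≤ ε := opNorm_nonneg _
  set Δ := Qhat - Q with hΔ_def
  have hΔ : ∀ x, ‖toEuc (Δ.mulVec x)‖ ≤ ε * ‖toEuc x‖ := fun x => mulVec_le_opNorm _ x
  -- operator norm bounds for Q and Qhat
  have hWWt : W * Wᵀ = 1 := mul_eq_one_comm.mp hW
  have hWt : (Wᵀ)ᵀ * Wᵀ = 1 := by rw [Matrix.transpose_transpose]; exact hWWt
  have hQ : ∀ y, ‖toEuc (Q.mulVec y)‖ ≤ σ₁ * ‖toEuc y‖ := by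
    intro y
    have h1 : Q.mulVec y = U.mulVec ((Matrix.diagonal s).mulVec (Wᵀ.mulVec y)) := by
      rw [hSVD, ← Matrix.mulVec_mulVec, ← Matrix.mulVec_mulVec]
    rw [h1, norm_mulVec_isometry hU]
    calc ‖toEuc ((Matrix.diagonal s).mulVec (Wᵀ.mulVec y))‖
        ≤ σ₁ * ‖toEuc (Wᵀ.mulVec y)‖ := by
          apply diag_mulVec_le hσ₁_pos.le
          intro i
          rw [abs_of_pos (hs_pos i)]
          exact hs_le i
    _ = σ₁ * ‖toEuc y‖ := by rw [norm_mulVec_isometry hWt]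
  have hQhat : ∀ y, ‖toEuc (Qhat.mulVec y)‖ ≤ (σ₁ + ε) * ‖toEuc y‖ := by
    intro y
    have h1 : Qhat.mulVec y = Q.mulVec y + Δ.mulVec y := by
      rw [hΔ_def, Matrix.sub_mulVec]; abel
    have h2 : ‖toEuc (Qhat.mulVec y)‖ ≤ ‖toEuc (Q.mulVec y)‖ + ‖toEuc (Δ.mulVec y)‖ := by
      rw [h1]
      exact norm_add_le (toEuc (Q.mulVec y)) (toEuc (Δ.mulVec y))
    have := hQ y
    have := hΔ y
    nlinarith [euc_norm_nonneg y]
  -- the perturbation of the Gram-type matrix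
  set E := Qhat * Qhatᵀ - Q * Qᵀ with hE_def
  set cE := (2 * σ₁ + ε) * ε with hcE_def
  have hcE0 : 0 ≤ cE := by positivity
  have hEsplit : E = Δ * Qhatᵀ + Q * Δᵀ := by
    rw [hE_def, hΔ_def, Matrix.transpose_sub, Matrix.sub_mul, Matrix.mul_sub]
    abel
  have hE : ∀ x, ‖toEuc (E.mulVec x)‖ ≤ cE * ‖toEuc x‖ := by
    intro x
    have h1 : E.mulVec x = Δ.mulVec (Qhatᵀ.mulVec x) + Q.mulVec (Δᵀ.mulVec x) := by
      rw [hEsplit, Matrix.add_mulVec, Matrix.mulVec_mulVec, Matrix.mulVec_mulVec]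
    have h2 : ‖toEuc (E.mulVec x)‖
        ≤ ‖toEuc (Δ.mulVec (Qhatᵀ.mulVec x))‖ + ‖toEuc (Q.mulVec (Δᵀ.mulVec x))‖ := by
      rw [h1]; exact norm_add_le (toEuc (Δ.mulVec (Qhatᵀ.mulVec x))) (toEuc (Q.mulVec (Δᵀ.mulVec x)))
    have h3 : ‖toEuc (Δ.mulVec (Qhatᵀ.mulVec x))‖ ≤ ε * ((σ₁ + ε) * ‖toEuc x‖) := by
      calc ‖toEuc (Δ.mulVec (Qhatᵀ.mulVec x))‖ ≤ ε * ‖toEuc (Qhatᵀ.mulVec x)‖ := hΔ _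
      _ ≤ ε * ((σ₁ + ε) * ‖toEuc x‖) := by
          have := transpose_bound (by positivity : (0:ℝ) ≤ σ₁ + ε) hQhat x
          nlinarith
    have h4 : ‖toEuc (Q.mulVec (Δᵀ.mulVec x))‖ ≤ σ₁ * (ε * ‖toEuc x‖) := by
      calc ‖toEuc (Q.mulVec (Δᵀ.mulVec x))‖ ≤ σ₁ * ‖toEuc (Δᵀ.mulVec x)‖ := hQ _
      _ ≤ σ₁ * (ε * ‖toEuc x‖) := by
          have := transpose_bound hε0 hΔ x
          nlinarith
    rw [hcE_def]
    nlinarith [euc_norm_nonneg x]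
  -- projection complement
  set K : Matrix (Fin N) (Fin N) ℝ := 1 - Uhat * Uhatᵀ with hK_def
  have hKUhat : K * Uhat = 0 := by
    rw [hK_def, Matrix.sub_mul, Matrix.one_mul, Matrix.mul_assoc, hUhat, Matrix.mul_one,
      sub_self]
  have hKQhat : K * (Qhat * Qhatᵀ) = 0 := by
    rw [hSVDhat]
    have : Uhat * Matrix.diagonal shat * Whatᵀ * (Uhat * Matrix.diagonal shat * Whatᵀ)ᵀ
        = Uhat * (Matrix.diagonal shat * Whatᵀ * (Uhat * Matrix.diagonal shat * Whatᵀ)ᵀ) := by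
      simp only [Matrix.mul_assoc]
    rw [this, ← Matrix.mul_assoc, hKUhat, Matrix.zero_mul]
  have hQQtU : Q * Qᵀ * U = U * Matrix.diagonal (fun i => s i * s i) := by
    rw [hSVD]
    rw [Matrix.transpose_mul, Matrix.transpose_mul, Matrix.transpose_transpose,
      Matrix.diagonal_transpose]
    calc U * Matrix.diagonal s * Wᵀ * (W * (Matrix.diagonal s * Uᵀ)) * U
        = U * Matrix.diagonal s * (Wᵀ * W) * Matrix.diagonal s * (Uᵀ * U) := by
          simp only [Matrix.mul_assoc]
    _ = U * (Matrix.diagonal s * Matrix.diagonal s) := by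
          rw [hW, hU, Matrix.mul_one, Matrix.mul_one, Matrix.mul_assoc]
    _ = U * Matrix.diagonal (fun i => s i * s i) := by
          rw [Matrix.diagonal_mul_diagonal]
  have hkey : K * U * Matrix.diagonal (fun i => s i * s i) = -(K * E * U) := by
    have h1 : K * E * U = K * (Qhat * Qhatᵀ) * U - K * (Q * Qᵀ) * U := by
      rw [hE_def, Matrix.mul_sub, Matrix.sub_mul]
    rw [h1, hKQhat, Matrix.zero_mul, zero_sub, neg_neg]
    rw [Matrix.mul_assoc K (Q * Qᵀ) U, hQQtU, ← Matrix.mul_assoc]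
  -- Frobenius-type estimate
  have hcol_one : ∀ j, ‖toEuc (fun i => U i j)‖ ^ 2 = 1 := by
    intro j
    rw [euc_norm_sq]
    have : ∑ i, U i j ^ 2 = (Uᵀ * U) j j := by
      simp [Matrix.mul_apply, sq]
    rw [this, hU, Matrix.one_apply_eq]
  have hKEU_col : ∀ j, ∑ i, (K * E * U) i j ^ 2 ≤ cE ^ 2 := by
    intro j
    have h1 : (fun i => (K * E * U) i j) = (K * E).mulVec (fun k => U k j) := mul_col _ _ j
    have h2 : ∑ i, (K * E * U) i j ^ 2 = ‖toEuc ((K * E).mulVec (fun k => U k j))‖ ^ 2 := by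
      rw [euc_norm_sq, ← h1]
    rw [h2]
    have h3 : ‖toEuc ((K * E).mulVec (fun k => U k j))‖ ≤ cE * ‖toEuc (fun k => U k j)‖ := by
      rw [← Matrix.mulVec_mulVec]
      calc ‖toEuc (K.mulVec (E.mulVec (fun k => U k j)))‖
          ≤ ‖toEuc (E.mulVec (fun k => U k j))‖ := by
            rw [hK_def]; exact proj_compl_contraction hUhat _
      _ ≤ cE * ‖toEuc (fun k => U k j)‖ := hE _
    have h5 : ‖toEuc (fun k => U k j)‖ = 1 := by
      nlinarith [euc_norm_nonneg (fun k => U k j : Fin N → ℝ), hcol_one j]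
    rw [h5, mul_one] at h3
    exact pow_le_pow_left₀ (euc_norm_nonneg _) h3 2
  have hKEU : ∑ i, ∑ j, (K * E * U) i j ^ 2 ≤ d * cE ^ 2 := by
    rw [Finset.sum_comm]
    calc ∑ j, ∑ i, (K * E * U) i j ^ 2 ≤ ∑ _j : Fin d, cE ^ 2 :=
        Finset.sum_le_sum (fun j _ => hKEU_col j)
    _ = d * cE ^ 2 := by
        rw [Finset.sum_const, Finset.card_univ, Fintype.card_fin, nsmul_eq_mul]
  have hdiag_lb : σd ^ 4 * (∑ i, ∑ j, (K * U) i j ^ 2)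
      ≤ ∑ i, ∑ j, (K * U * Matrix.diagonal (fun i => s i * s i)) i j ^ 2 := by
    rw [Finset.mul_sum]
    apply Finset.sum_le_sum
    intro i _
    rw [Finset.mul_sum]
    apply Finset.sum_le_sum
    intro j _
    rw [Matrix.mul_diagonal]
    have h1 : σd ≤ s j := hd_le j
    have h2 : 0 < s j := hs_pos j
    have h3 : σd ^ 2 ≤ s j ^ 2 := by nlinarith
    have h4 : σd ^ 4 ≤ s j ^ 4 := by nlinarith
    calc σd ^ 4 * (K * U) i j ^ 2 ≤ s j ^ 4 * (K * U) i j ^ 2 := by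
          nlinarith [sq_nonneg ((K * U) i j)]
    _ = ((K * U) i j * (s j * s j)) ^ 2 := by ring
  have hneg : ∑ i, ∑ j, (K * U * Matrix.diagonal (fun i => s i * s i)) i j ^ 2
      = ∑ i, ∑ j, (K * E * U) i j ^ 2 := by
    rw [hkey]
    congr 1; ext i; congr 1; ext j
    simp [Matrix.neg_apply]
  have hfrobKU : σd ^ 4 * (∑ i, ∑ j, (K * U) i j ^ 2) ≤ d * cE ^ 2 := by
    calc σd ^ 4 * (∑ i, ∑ j, (K * U) i j ^ 2)
        ≤ ∑ i, ∑ j, (K * U * Matrix.diagonal (fun i => s i * s i)) i j ^ 2 := hdiag_lb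
    _ = ∑ i, ∑ j, (K * E * U) i j ^ 2 := hneg
    _ ≤ d * cE ^ 2 := hKEU
  -- Procrustes
  set Mmat := Uhatᵀ * U with hM_def
  have hMc : ∀ x, ‖toEuc (Mmat.mulVec x)‖ ≤ ‖toEuc x‖ := by
    intro x
    have h1 : Mmat.mulVec x = Uhatᵀ.mulVec (U.mulVec x) := by
      rw [hM_def, Matrix.mulVec_mulVec]
    rw [h1]
    have h2 : ∀ y, ‖toEuc (Uhat.mulVec y)‖ ≤ 1 * ‖toEuc y‖ := by
      intro y; rw [norm_mulVec_isometry hUhat, one_mul]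
    calc ‖toEuc (Uhatᵀ.mulVec (U.mulVec x))‖ ≤ 1 * ‖toEuc (U.mulVec x)‖ :=
        transpose_bound zero_le_one h2 _
    _ = ‖toEuc x‖ := by rw [one_mul, norm_mulVec_isometry hU]
  obtain ⟨O, hO, htr⟩ := procrustes Mmat hMc
  refine ⟨O, hO, ?_⟩
  -- trace identities
  have hKt : Kᵀ = K := by
    rw [hK_def, Matrix.transpose_sub, Matrix.transpose_one, Matrix.transpose_mul,
      Matrix.transpose_transpose]
  have hKK : K * K = K := by
    rw [hK_def]
    have hPP : (Uhat * Uhatᵀ) * (Uhat * Uhatᵀ) = Uhat * Uhatᵀ := by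
      calc (Uhat * Uhatᵀ) * (Uhat * Uhatᵀ) = Uhat * (Uhatᵀ * Uhat) * Uhatᵀ := by simp only [Matrix.mul_assoc]
      _ = Uhat * Uhatᵀ := by rw [hUhat, Matrix.mul_one]
    rw [Matrix.mul_sub, Matrix.sub_mul, Matrix.sub_mul, Matrix.one_mul, Matrix.mul_one, hPP]
    simp only [Matrix.one_mul, Matrix.mul_one]
    abel
  have htrU : Matrix.trace (Uᵀ * U) = (d : ℝ) := by rw [hU, Matrix.trace_one]; simp
  have hT2 : ∑ i, ∑ j, (K * U) i j ^ 2 = (d : ℝ) - Matrix.trace (Mmatᵀ * Mmat) := by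
    rw [sum_sq_eq_trace]
    have h1 : (K * U)ᵀ * (K * U) = Uᵀ * U - Mmatᵀ * Mmat := by
      rw [Matrix.transpose_mul, hKt]
      calc Uᵀ * K * (K * U) = Uᵀ * (K * K) * U := by simp only [Matrix.mul_assoc]
      _ = Uᵀ * K * U := by rw [hKK]
      _ = Uᵀ * U - Mmatᵀ * Mmat := by
          rw [hK_def, hM_def, Matrix.transpose_mul, Matrix.transpose_transpose,
            Matrix.mul_sub, Matrix.mul_one, Matrix.sub_mul]
          simp only [Matrix.mul_assoc]
    rw [h1, Matrix.trace_sub, htrU]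
  have hT1 : ∑ i, ∑ j, (Uhat * O - U) i j ^ 2
      = 2 * (d : ℝ) - 2 * Matrix.trace (Oᵀ * Mmat) := by
    rw [sum_sq_eq_trace]
    have h1 : (Uhat * O - U)ᵀ * (Uhat * O - U)
        = Oᵀ * O + Uᵀ * U - (Oᵀ * Mmat + (Oᵀ * Mmat)ᵀ) := by
      rw [Matrix.transpose_sub, Matrix.transpose_mul, hM_def]
      have e : (Oᵀ * (Uhatᵀ * U))ᵀ = Uᵀ * Uhat * O := by
        rw [Matrix.transpose_mul, Matrix.transpose_mul, Matrix.transpose_transpose,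
          Matrix.transpose_transpose, Matrix.mul_assoc]
      have h2 : Oᵀ * Uhatᵀ * (Uhat * O) = Oᵀ * O := by
        rw [← Matrix.mul_assoc (Oᵀ * Uhatᵀ) Uhat O, Matrix.mul_assoc Oᵀ Uhatᵀ Uhat, hUhat,
          Matrix.mul_one]
      calc (Oᵀ * Uhatᵀ - Uᵀ) * (Uhat * O - U)
          = Oᵀ * Uhatᵀ * (Uhat * O) + Uᵀ * U - (Oᵀ * Uhatᵀ * U + Uᵀ * (Uhat * O)) := by
            rw [Matrix.sub_mul, Matrix.mul_sub, Matrix.mul_sub]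
            abel
      _ = Oᵀ * O + Uᵀ * U - (Oᵀ * (Uhatᵀ * U) + Uᵀ * Uhat * O) := by
            rw [h2, Matrix.mul_assoc Oᵀ Uhatᵀ U, ← Matrix.mul_assoc Uᵀ Uhat O]
      _ = Oᵀ * O + Uᵀ * U - (Oᵀ * (Uhatᵀ * U) + (Oᵀ * (Uhatᵀ * U))ᵀ) := by rw [e]
    rw [h1, Matrix.trace_sub, Matrix.trace_add, Matrix.trace_add, Matrix.trace_transpose,
      hO, Matrix.trace_one, htrU]
    simp only [Fintype.card_fin]
    push_cast
    ring
  -- final assembly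
  have hfrob_sq : frobNorm (Uhat * O - U) ^ 2 = ∑ i, ∑ j, (Uhat * O - U) i j ^ 2 := by
    rw [frobNorm, Real.sq_sqrt (by positivity)]
  have hmain_sq : frobNorm (Uhat * O - U) ^ 2 ≤ 2 * d * cE ^ 2 / σd ^ 4 := by
    rw [hfrob_sq, hT1]
    have h1 : (d : ℝ) - Matrix.trace (Mmatᵀ * Mmat) ≤ d * cE ^ 2 / σd ^ 4 := by
      rw [← hT2, le_div_iff₀ (by positivity : (0:ℝ) < σd ^ 4)]
      linear_combination hfrobKU
    have h2 : Matrix.trace (Mmatᵀ * Mmat) ≤ Matrix.trace (Oᵀ * Mmat) := htr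
    have h3 : 2 * (d:ℝ) - 2 * Matrix.trace (Oᵀ * Mmat)
        ≤ 2 * ((d : ℝ) - Matrix.trace (Mmatᵀ * Mmat)) := by linarith
    calc 2 * (d:ℝ) - 2 * Matrix.trace (Oᵀ * Mmat)
        ≤ 2 * ((d : ℝ) - Matrix.trace (Mmatᵀ * Mmat)) := h3
    _ ≤ 2 * (d * cE ^ 2 / σd ^ 4) := by linarith
    _ = 2 * d * cE ^ 2 / σd ^ 4 := by ring
  have hRHS_nonneg : 0 ≤ (2 * Real.sqrt (2 * d) / σd ^ 2) * (2 * σ₁ + ε) * ε := by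
    have h1 : 0 ≤ Real.sqrt (2 * d) := Real.sqrt_nonneg _
    have h2 : 0 ≤ 2 * σ₁ + ε := by positivity
    positivity
  apply le_of_sq_le_sq (by rw [frobNorm]; positivity) hRHS_nonneg
  calc frobNorm (Uhat * O - U) ^ 2 ≤ 2 * d * cE ^ 2 / σd ^ 4 := hmain_sq
  _ ≤ ((2 * Real.sqrt (2 * d) / σd ^ 2) * (2 * σ₁ + ε) * ε) ^ 2 := by
      have hsq : Real.sqrt (2 * d) ^ 2 = 2 * (d : ℝ) := Real.sq_sqrt (by positivity)
      have expand : ((2 * Real.sqrt (2 * d) / σd ^ 2) * (2 * σ₁ + ε) * ε) ^ 2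
          = Real.sqrt (2 * d) ^ 2 * (4 * ((2 * σ₁ + ε) * ε) ^ 2) / σd ^ 4 := by
        ring
      rw [expand, hsq, hcE_def]
      rw [div_le_div_iff₀ (by positivity) (by positivity)]
      have hd0 : (0:ℝ) ≤ (d : ℝ) := Nat.cast_nonneg d
      have hX : (0:ℝ) ≤ ((2 * σ₁ + ε) * ε) ^ 2 := sq_nonneg _
      have hσ4 : (0:ℝ) < σd ^ 4 := by positivity
      nlinarith [mul_nonneg (mul_nonneg hd0 hX) hσ4.le]

end Stmt12
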